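/- The free K-vector space H on forests of planar rooted trees is generated, as an algebra under the two operations * and ≻, by the single leaf |: the smallest K-linear subspace of H containing | and closed under both * and ≻ is H itself. -/

import Mathlib

open scoped TensorProduct

/-- Planar rooted trees: a tree is either the leaf `|`, or a grafting of at
least two planar rooted trees (`graft t₁ t₂ rest` represents `[t₁, t₂, rest…]`). -/
inductive PTree : Type
  | leaf : PTree
  | graft (t₁ t₂ : PTree) (rest : List PTree) : PTree

/-- A forest is a nonempty word of planar rooted trees. -/
abbrev Forest : Type := {l : List PTree // l ≠ []}

/-- Grafting of a list of trees (only meaningful on lists of length ≥ 2;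
on shorter lists we return a junk value, which is never used). -/
def graftList : List PTree → PTree
  | [] => .leaf
  | [a] => a
  | a :: b :: rest => .graft a b rest

mutual
/-- Number of leaves of a planar rooted tree. -/
def leavesT : PTree → ℕ
  | .leaf => 1
  | .graft a b rest => leavesT a + leavesT b + leavesL rest

/-- Sum of the numbers of leaves of a list of trees. -/
def leavesL : List PTree → ℕ
  | [] => 0
  | t :: ts => leavesT t + leavesL ts
end

/-- Number of leaves of a forest. -/
def leavesF (w : Forest) : ℕ := leavesL w.1

variable (K : Type*) [Field K]

/-- `H K` is the free `K`-vector space with basis the set of forests of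
planar rooted trees. -/
abbrev H : Type _ := Forest →₀ K

/-- The leaf, as a (one-tree) forest. -/
def leafF : Forest := ⟨[PTree.leaf], by simp⟩

/-- The concatenation product `*`, as a bilinear map on `H K`;
on basis forests it is concatenation of words. -/
noncomputable def mulH : H K →ₗ[K] H K →ₗ[K] H K :=
  Finsupp.lift (H K →ₗ[K] H K) K Forest fun x =>
    Finsupp.lift (H K) K Forest fun y =>
      Finsupp.single ⟨x.1 ++ y.1, by simp [x.2]⟩ 1

/-- The grafting operation `≻` on two basis forests:
`(t₁…tₚ) ≻ (s₁…s_q) = Σ_{k=1}^{q} Σ_{i=0}^{p−1}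
t₁…t_{p−(i+1)} [t_{p−i},…,tₚ, s₁,…,s_k] s_{k+1}…s_q`. -/
noncomputable def succForest (x y : Forest) : H K :=
  ∑ k ∈ Finset.range y.1.length, ∑ i ∈ Finset.range x.1.length,
    Finsupp.single
      ⟨x.1.take (x.1.length - (i + 1)) ++
        (graftList (x.1.drop (x.1.length - (i + 1)) ++ y.1.take (k + 1)) :: y.1.drop (k + 1)),
        by simp⟩ 1

/-- The operation `≻`, as a bilinear map on `H K`. -/
noncomputable def succH : H K →ₗ[K] H K →ₗ[K] H K :=
  Finsupp.lift (H K →ₗ[K] H K) K Forest fun x =>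
    Finsupp.lift (H K) K Forest fun y => succForest K x y

lemma leavesT_pos : ∀ t : PTree, 0 < leavesT t
  | .leaf => by simp [leavesT]
  | .graft a b rest => by
      have := leavesT_pos a
      simp only [leavesT]; omega

lemma leavesL_append (a b : List PTree) : leavesL (a ++ b) = leavesL a + leavesL b := by
  induction a with
  | nil => simp [leavesL]
  | cons t ts ih =>
      simp only [List.cons_append, leavesL, List.append_eq] at *
      omega

lemma leavesL_pos {l : List PTree} (h : l ≠ []) : 0 < leavesL l := by
  cases l with
  | nil => simp at h
  | cons t ts => have := leavesT_pos t; simp only [leavesL]; omega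

lemma mulH_single (x y : Forest) :
    mulH K (Finsupp.single x 1) (Finsupp.single y 1)
      = Finsupp.single ⟨x.1 ++ y.1, by simp [x.2]⟩ 1 := by
  simp [mulH]

lemma succH_single (x y : Forest) :
    succH K (Finsupp.single x 1) (Finsupp.single y 1) = succForest K x y := by
  simp [succH]

lemma key {K : Type*} [Field K] (W : Submodule K (H K))
    (hleaf : (Finsupp.single leafF 1 : H K) ∈ W)
    (hmul : ∀ x y : H K, x ∈ W → y ∈ W → mulH K x y ∈ W)
    (hsucc : ∀ x y : H K, x ∈ W → y ∈ W → succH K x y ∈ W) :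
    ∀ n : ℕ, ∀ w : Forest, leavesF w ≤ n → (Finsupp.single w 1 : H K) ∈ W := by
  intro n
  induction n with
  | zero =>
    intro w hw
    exact absurd hw (by have := leavesL_pos w.2; simp [leavesF]; omega)
  | succ n ih =>
    rintro ⟨l, hl⟩ hw
    match l, hl with
    | t :: s :: ss, hl =>
      -- a forest with at least two trees is a product
      have h1 : (Finsupp.single (⟨[t], by simp⟩ : Forest) 1 : H K) ∈ W := by
        apply ih
        have h2 := leavesT_pos s
        simp only [leavesF, leavesL] at hw ⊢
        omega
      have h2 : (Finsupp.single (⟨s :: ss, by simp⟩ : Forest) 1 : H K) ∈ W := by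
        apply ih
        have h3 := leavesT_pos t
        simp only [leavesF, leavesL] at hw ⊢
        omega
      have := hmul _ _ h1 h2
      rw [mulH_single] at this
      exact this
    | [PTree.leaf], hl => exact hleaf
    | [PTree.graft a b rest], hl =>
      set x : Forest := ⟨[a], by simp⟩ with hxdef
      set y : Forest := ⟨b :: rest, by simp⟩ with hydef
      have hwle : leavesT a + leavesT b + leavesL rest ≤ n + 1 := by
        simp only [leavesF, leavesL, leavesT] at hw; omega
      have ha := leavesT_pos a
      have hb := leavesT_pos b
      have hx : (Finsupp.single x 1 : H K) ∈ W := by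
        apply ih; simp only [leavesF, leavesL, hxdef]; omega
      have hy : (Finsupp.single y 1 : H K) ∈ W := by
        apply ih; simp only [leavesF, leavesL, hydef]; omega
      have hxy := hsucc _ _ hx hy
      rw [succH_single] at hxy
      -- expand succForest x y
      have hexp : succForest K x y =
          (∑ k ∈ Finset.range rest.length,
            Finsupp.single (⟨graftList (a :: b :: rest.take k) :: rest.drop k, by simp⟩ : Forest)
              (1 : K)) +
          Finsupp.single (⟨[PTree.graft a b rest], hl⟩ : Forest) 1 := by
        simp only [succForest, hxdef, hydef, List.length_cons, List.length_nil, Nat.zero_add,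
          Finset.sum_range_one, Nat.sub_self, List.take_zero, List.drop_zero,
          List.nil_append, List.singleton_append, List.take_succ_cons, List.drop_succ_cons]
        rw [Finset.sum_range_succ]
        congr 1
        have hval : (⟨graftList (a :: b :: rest.take rest.length) :: rest.drop rest.length,
            by simp⟩ : Forest) = ⟨[PTree.graft a b rest], hl⟩ :=
          Subtype.ext (by simp [graftList, List.take_length, List.drop_length])
        rw [hval]
      have hcorr : ∀ k ∈ Finset.range rest.length,
          (Finsupp.single (⟨graftList (a :: b :: rest.take k) :: rest.drop k, by simp⟩ : Forest)
            (1 : K) : H K) ∈ W := by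
        intro k hk
        rw [Finset.mem_range] at hk
        have hdrop : rest.drop k ≠ [] := by
          intro h
          have := List.drop_eq_nil_iff.mp h
          omega
        have hsplit : leavesL (rest.take k) + leavesL (rest.drop k) = leavesL rest := by
          rw [← leavesL_append, List.take_append_drop]
        have hdp := leavesL_pos hdrop
        have hA : (Finsupp.single (⟨[graftList (a :: b :: rest.take k)], by simp⟩ : Forest)
            1 : H K) ∈ W := by
          apply ih
          simp only [leavesF, leavesL, graftList, leavesT]
          omega
        have hB : (Finsupp.single (⟨rest.drop k, hdrop⟩ : Forest) 1 : H K) ∈ W := by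
          apply ih
          have htk := leavesL_pos (l := a :: b :: rest.take k) (by simp)
          simp only [leavesF, leavesL] at htk ⊢
          omega
        have := hmul _ _ hA hB
        rw [mulH_single] at this
        exact this
      have hsum : (∑ k ∈ Finset.range rest.length,
          Finsupp.single (⟨graftList (a :: b :: rest.take k) :: rest.drop k, by simp⟩ : Forest)
            (1 : K) : H K) ∈ W :=
        Submodule.sum_mem W hcorr
      have : (Finsupp.single (⟨[PTree.graft a b rest], hl⟩ : Forest) 1 : H K)
          = succForest K x y - (∑ k ∈ Finset.range rest.length,
            Finsupp.single (⟨graftList (a :: b :: rest.take k) :: rest.drop k, by simp⟩ : Forest)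
              (1 : K)) := by
        rw [hexp]; abel
      rw [this]
      exact Submodule.sub_mem W hxy hsum

/-- `H K` is generated, under the two operations `*` and `≻`, by
the single leaf: any subspace containing the leaf and closed under both
operations is all of `H K`. -/
theorem stmt3 (K : Type*) [Field K] (W : Submodule K (H K))
    (hleaf : (Finsupp.single leafF 1 : H K) ∈ W)
    (hmul : ∀ x y : H K, x ∈ W → y ∈ W → mulH K x y ∈ W)
    (hsucc : ∀ x y : H K, x ∈ W → y ∈ W → succH K x y ∈ W) :
    W = ⊤ := by
  have hall : ∀ w : Forest, (Finsupp.single w 1 : H K) ∈ W := fun w =>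
    key W hleaf hmul hsucc (leavesF w) w le_rfl
  rw [eq_top_iff]
  rintro v -
  induction v using Finsupp.induction with
  | zero => exact W.zero_mem
  | single_add w c f _ _ ihf =>
    refine W.add_mem ?_ ihf
    have h : (Finsupp.single w c : H K) = c • Finsupp.single w 1 := by
      rw [Finsupp.smul_single, smul_eq_mul, mul_one]
    rw [h]
    exact W.smul_mem c (hall w)
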